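/- Let c ≥ 2, let n ≥ c(c+1)/2 with n ≡ c(c+1)/2 (mod 2), and set x_1 = n + c(c-1)/2 - (c-1)^2 and x_i = 2(c-i)+1 for 2 ≤ i ≤ c. Then X = {x_1, ..., x_c} is a set of c distinct nonnegative integers with x_1 > x_2 > ... > x_c, the associated partition P(X) has size n, all elements of X are odd, and the 2-core of P(X) is γ_c. -/

import Mathlib

/-- A partition as a weakly decreasing list of positive naturals. -/
def IsPartition (l : List ℕ) : Prop :=
  l.Pairwise (· ≥ ·) ∧ ∀ x ∈ l, 0 < x

/-- Membership of the (1-based) cell `(i, j)` in the Young diagram of `l`. -/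
def cellMem (l : List ℕ) (i j : ℕ) : Prop :=
  1 ≤ i ∧ i ≤ l.length ∧ 1 ≤ j ∧ j ≤ l.getD (i - 1) 0

/-- The `j`-th part of the conjugate partition: `λ'_j = |{i : λ_i ≥ j}|`. -/
def conjPart (l : List ℕ) (j : ℕ) : ℕ :=
  (l.filter (fun a => j ≤ a)).length

/-- The conjugate partition as a list. -/
def conjList (l : List ℕ) : List ℕ :=
  (List.range (l.headD 0)).map (fun i => conjPart l (i + 1))

/-- Hook length `h_{i,j}(λ) = (λ_i - j) + (λ'_j - i) + 1` (1-based coordinates). -/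
def hookLength (l : List ℕ) (i j : ℕ) : ℕ :=
  (l.getD (i - 1) 0 - j) + (conjPart l j - i) + 1

/-- `λ` has a hook of size `h`. -/
def HasHook (l : List ℕ) (h : ℕ) : Prop :=
  ∃ i j, cellMem l i j ∧ hookLength l i j = h

/-- The hook `H_{i,j}(λ)` as a set of cells. -/
def hookSet (l : List ℕ) (i j : ℕ) : Set (ℕ × ℕ) :=
  {q | (q.1 = i ∧ cellMem l i q.2 ∧ j ≤ q.2) ∨ (q.2 = j ∧ cellMem l q.1 j ∧ i ≤ q.1)}

/-- The rim hook `R_{i,j}(λ)` as a set of cells. -/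
def rimSet (l : List ℕ) (i j : ℕ) : Set (ℕ × ℕ) :=
  {q | ∃ x y t : ℕ, (x, y) ∈ hookSet l i j ∧ cellMem l (x + t) (y + t) ∧
      ¬ cellMem l (x + t + 1) (y + t + 1) ∧ q = (x + t, y + t)}

/-- `l'` is obtained from `l` by removing a rim hook of size `e`. -/
def RemovesHook (e : ℕ) (l l' : List ℕ) : Prop :=
  IsPartition l' ∧ ∃ i j, cellMem l i j ∧ hookLength l i j = e ∧
    ∀ a b, cellMem l' a b ↔ (cellMem l a b ∧ (a, b) ∉ rimSet l i j)

/-- `m` is the `e`-core of `l`: obtained by repeatedly removing `e`-hooks until none remain. -/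
def IsECore (e : ℕ) (l m : List ℕ) : Prop :=
  IsPartition m ∧ Relation.ReflTransGen (RemovesHook e) l m ∧ ¬ HasHook m e

/-- The staircase partition `γ_c = (c, c-1, ..., 1)`. -/
def staircase (c : ℕ) : List ℕ := (List.range c).reverse.map (· + 1)

/-- The sequence `(x_1 - (t-1), x_2 - (t-2), ..., x_t)` associated to a β-set `X`,
with `x_1 > x_2 > ... > x_t` the elements of `X` in decreasing order. -/
def betaList (X : Finset ℕ) : List ℕ :=
  ((X.sort (· ≤ ·)).reverse).mapIdx (fun k x => x - (X.card - 1 - k))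

/-- The partition `P(X)` associated to a β-set `X` (dropping the zero parts). -/
def betaPartition (X : Finset ℕ) : List ℕ := (betaList X).filter (fun a => a ≠ 0)

lemma staircase_length (t : ℕ) : (staircase t).length = t := by simp [staircase]

lemma staircase_succ (t : ℕ) : staircase (t+1) = (t+1) :: staircase t := by
  simp [staircase, List.range_succ]

lemma mem_staircase {t x : ℕ} : x ∈ staircase t ↔ 1 ≤ x ∧ x ≤ t := by
  simp only [staircase, List.mem_map, List.mem_reverse, List.mem_range]
  constructor
  · rintro ⟨a, ha, rfl⟩; omega
  · rintro ⟨h1, h2⟩; exact ⟨x - 1, by omega, by omega⟩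

lemma staircase_getD (t k : ℕ) : (staircase t).getD k 0 = t - k := by
  rcases Nat.lt_or_ge k t with h | h
  · rw [List.getD_eq_getElem _ _ (by rw [staircase_length]; omega)]
    simp only [staircase, List.getElem_map, List.getElem_reverse, List.getElem_range,
      List.length_reverse, List.length_range]
    omega
  · rw [List.getD_eq_default _ _ (by rw [staircase_length]; omega)]; omega

lemma staircase_sorted (t : ℕ) : (staircase t).Pairwise (· ≥ ·) := by
  induction t with
  | zero => simp [staircase]
  | succ t ih =>
    rw [staircase_succ]
    exact List.pairwise_cons.mpr ⟨fun b hb => by rw [mem_staircase] at hb; omega, ih⟩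

lemma isPartition_staircase (t : ℕ) : IsPartition (staircase t) :=
  ⟨staircase_sorted t, fun x hx => by rw [mem_staircase] at hx; omega⟩

lemma isPartition_cons_stair {x t : ℕ} (h1 : 1 ≤ x) (h2 : t ≤ x) : IsPartition (x :: staircase t) := by
  constructor
  · exact List.pairwise_cons.mpr ⟨fun b hb => by rw [mem_staircase] at hb; omega, staircase_sorted t⟩
  · intro y hy
    rcases List.mem_cons.mp hy with rfl | hy
    · omega
    · rw [mem_staircase] at hy; omega

lemma cellMem_cons_stair {x t a b : ℕ} :
    cellMem (x :: staircase t) a b ↔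
      (a = 1 ∧ 1 ≤ b ∧ b ≤ x) ∨ (2 ≤ a ∧ a ≤ t + 1 ∧ 1 ≤ b ∧ b + a ≤ t + 2) := by
  unfold cellMem
  have hl : (x :: staircase t).length = t + 1 := by simp [staircase_length]
  rw [hl]
  match a with
  | 0 => simp
  | 1 => simp
  | (a+2) =>
    have h1 : ((x :: staircase t).getD (a + 2 - 1) 0) = t - a := by
      show ((x :: staircase t).getD (a+1) 0) = t - a
      rw [List.getD_cons_succ, staircase_getD]
    rw [h1]
    omega

lemma conjPart_staircase (t : ℕ) {j : ℕ} (hj : 1 ≤ j) : conjPart (staircase t) j = t + 1 - j := by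
  induction t with
  | zero => simp [conjPart, staircase]; omega
  | succ t ih =>
    rw [staircase_succ]
    unfold conjPart at *
    rw [List.filter_cons]
    by_cases h : j ≤ t + 1
    · rw [if_pos (by simpa using h), List.length_cons, ih]; omega
    · rw [if_neg (by simpa using h), ih]; omega

lemma conjPart_cons_big {x t j : ℕ} (hx : j ≤ x) (ht : t < j) : conjPart (x :: staircase t) j = 1 := by
  unfold conjPart
  rw [List.filter_cons, if_pos (by simpa using hx), List.filter_eq_nil_iff.mpr]
  · rfl
  · intro a ha; rw [mem_staircase] at ha; simp; omega

lemma staircase_no_hook_two (c : ℕ) : ¬ HasHook (staircase c) 2 := by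
  rintro ⟨i, j, ⟨hi1, hi2, hj1, hj2⟩, hlen⟩
  rw [staircase_length] at hi2
  rw [staircase_getD] at hj2
  unfold hookLength at hlen
  rw [staircase_getD, conjPart_staircase c hj1] at hlen
  omega

lemma staircase_sum (t : ℕ) : 2 * (staircase t).sum = t * (t + 1) := by
  induction t with
  | zero => rfl
  | succ t ih => rw [staircase_succ, List.sum_cons, Nat.mul_add, ih]; ring

lemma removes_step (t m : ℕ) (hm : t + 1 ≤ m) :
    RemovesHook 2 ((m + 2) :: staircase t) (m :: staircase t) := by
  have hhook : ∀ x y : ℕ, ((x, y) ∈ hookSet ((m+2) :: staircase t) 1 (m+1)) ↔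
      (x = 1 ∧ (y = m+1 ∨ y = m+2)) := by
    intro x y
    simp only [hookSet, Set.mem_setOf_eq, cellMem_cons_stair, true_and, and_true]
    omega
  have hrim : ∀ a b : ℕ, ((a, b) ∈ rimSet ((m+2) :: staircase t) 1 (m+1)) ↔
      (a = 1 ∧ (b = m+1 ∨ b = m+2)) := by
    intro a b
    simp only [rimSet, Set.mem_setOf_eq]
    constructor
    · rintro ⟨x, y, s, hxy, hcell, hncell, heq⟩
      rw [hhook] at hxy
      obtain ⟨rfl, hy⟩ := hxy
      rw [cellMem_cons_stair] at hcell
      rw [Prod.mk.injEq] at heq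
      omega
    · rintro ⟨rfl, hb⟩
      refine ⟨1, b, 0, ?_, ?_, ?_, rfl⟩
      · rw [hhook]; exact ⟨rfl, hb⟩
      · rw [cellMem_cons_stair]; omega
      · rw [cellMem_cons_stair]; omega
  refine ⟨isPartition_cons_stair (by omega) (by omega), 1, m + 1, ?_, ?_, ?_⟩
  · rw [cellMem_cons_stair]; omega
  · unfold hookLength
    have h1 : ((m+2) :: staircase t).getD (1 - 1) 0 = m + 2 := rfl
    rw [h1, conjPart_cons_big (by omega) (by omega)]
    omega
  · intro a b
    have := hrim a b
    rw [cellMem_cons_stair, cellMem_cons_stair]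
    constructor
    · intro h
      refine ⟨by omega, fun hmem => ?_⟩
      rw [this] at hmem
      omega
    · rintro ⟨h1, h2⟩
      rw [this] at h2
      omega

lemma chain_lemma (t k : ℕ) :
    Relation.ReflTransGen (RemovesHook 2) ((t + 1 + 2 * k) :: staircase t) (staircase (t + 1)) := by
  induction k with
  | zero =>
    rw [staircase_succ]
  | succ k ih =>
    have hstep := removes_step t (t + 1 + 2 * k) (by omega)
    have h2 : t + 1 + 2 * (k+1) = (t + 1 + 2*k) + 2 := by ring
    rw [h2]
    exact Relation.ReflTransGen.head hstep ih

theorem betaSet_construction_case_one (c n : ℕ) (hc : 2 ≤ c)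
    (hn : c * (c + 1) / 2 ≤ n) (hmod : n % 2 = (c * (c + 1) / 2) % 2)
    (X : Finset ℕ)
    (hXdef : X = insert (n + c * (c - 1) / 2 - (c - 1) ^ 2)
      ((Finset.range (c - 1)).image (fun j => 2 * j + 1))) :
    X.card = c ∧ (∀ x ∈ X, Odd x) ∧ (betaPartition X).sum = n ∧
      IsECore 2 (betaPartition X) (staircase c) := by
  obtain ⟨S, hS⟩ : ∃ S, (staircase (c-1)).sum = S := ⟨_, rfl⟩
  have hc1 : c - 1 + 1 = c := by omega
  have h1 : c * (c - 1) = 2 * S := by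
    have h := staircase_sum (c-1)
    rw [hc1, hS] at h
    rw [Nat.mul_comm]; omega
  have h2 : c * (c + 1) = 2 * S + 2 * c := by
    have e : c + 1 = (c - 1) + 2 := by omega
    rw [e, Nat.mul_add, h1]; ring
  have h3 : (c-1)^2 + (c-1) = 2 * S := by
    have e : (c-1)^2 + (c-1) = (c-1) * ((c-1)+1) := by ring
    rw [e, hc1, Nat.mul_comm, h1]
  have hn' : S + c ≤ n := by omega
  have hmod' : n % 2 = (S + c) % 2 := by omega
  obtain ⟨m, hm⟩ : ∃ m, n - S = m := ⟨_, rfl⟩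
  have hmge : c ≤ m := by omega
  have hx1 : n + c * (c - 1) / 2 - (c - 1) ^ 2 = m + c - 1 := by omega
  rw [hx1] at hXdef
  have hnotmem : m + c - 1 ∉ (Finset.range (c-1)).image (fun j => 2*j+1) := by
    simp only [Finset.mem_image, Finset.mem_range, not_exists]
    intro j; intro hj; omega
  have hcard : X.card = c := by
    rw [hXdef, Finset.card_insert_of_notMem hnotmem,
      Finset.card_image_of_injective _ (fun a b hab => by dsimp at hab; omega : Function.Injective (fun j => 2*j+1)),
      Finset.card_range]
    omega
  have hodd : ∀ x ∈ X, Odd x := by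
    intro x hx
    rw [hXdef, Finset.mem_insert] at hx
    rcases hx with rfl | hx
    · rw [Nat.odd_iff]; omega
    · rw [Finset.mem_image] at hx
      obtain ⟨j, _, rfl⟩ := hx
      rw [Nat.odd_iff]; omega
  have hsort : X.sort (· ≤ ·) = (List.range (c-1)).map (fun j => 2*j+1) ++ [m + c - 1] := by
    refine (fun hp hs => List.Perm.eq_of_pairwise' (Finset.pairwise_sort _ _) hs hp) ?_ ?_
    · refine List.perm_of_nodup_nodup_toFinset_eq (Finset.sort_nodup _ _) ?_ ?_
      · refine List.Nodup.append ?_ (List.nodup_singleton _) ?_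
        · exact (List.nodup_range (n := _)).map (fun a b hab => by omega)
        · intro a ha hb
          rw [List.mem_map] at ha
          rw [List.mem_singleton] at hb
          obtain ⟨j, hj, rfl⟩ := ha
          rw [List.mem_range] at hj
          omega
      · rw [Finset.sort_toFinset, hXdef]
        ext a
        simp only [List.mem_toFinset, List.mem_append, List.mem_map,
          List.mem_range, List.mem_singleton, Finset.mem_insert, Finset.mem_image,
          Finset.mem_range]
        exact or_comm
    · rw [List.pairwise_append]
      refine ⟨?_, List.pairwise_singleton _ _, ?_⟩
      · exact (List.pairwise_lt_range (n := _)).map _ (fun a b hab => by omega)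
      · intro a ha b hb
        rw [List.mem_map] at ha
        rw [List.mem_singleton] at hb
        obtain ⟨j, hj, rfl⟩ := ha
        rw [List.mem_range] at hj
        omega
  have hrev : (X.sort (· ≤ ·)).reverse
      = (m + c - 1) :: ((List.range (c-1)).map (fun j => 2*j+1)).reverse := by
    rw [hsort]; simp
  have hbeta : betaList X = m :: staircase (c-1) := by
    unfold betaList
    rw [hcard, hrev]
    apply List.ext_getElem
    · simp [staircase_length]
    · intro k hk1 hk2
      have hkc : k < c := by
        simp only [List.length_cons, staircase_length] at hk2; omega
      rw [List.getElem_mapIdx]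
      rcases k with _ | k
      · simp only [List.getElem_cons_zero]
        omega
      · simp only [List.getElem_cons_succ, List.getElem_reverse, List.getElem_map,
          List.getElem_range, List.length_map, List.length_range]
        have hst : ∀ (h : k < (staircase (c-1)).length), (staircase (c-1))[k] = c - 1 - k :=
          fun h => by rw [← List.getD_eq_getElem _ 0 h, staircase_getD]
        rw [hst]
        omega
  have hbp : betaPartition X = m :: staircase (c-1) := by
    rw [betaPartition, hbeta, List.filter_eq_self.mpr]
    intro a ha
    rcases List.mem_cons.mp ha with rfl | h
    · simpa using (by omega : a ≠ 0)
    · rw [mem_staircase] at h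
      simpa using (by omega : a ≠ 0)
  refine ⟨hcard, hodd, ?_, isPartition_staircase c, ?_, staircase_no_hook_two c⟩
  · rw [hbp, List.sum_cons, hS]; omega
  · rw [hbp]
    obtain ⟨k, hk⟩ : ∃ k, m = c + 2*k := ⟨(m - c)/2, by omega⟩
    have h := chain_lemma (c-1) k
    rw [hc1] at h
    rw [hk]
    exact h
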